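/- Let r, h : ℝ → ℝ² be smooth curves satisfying r' = c sec(2τ) r + h and h' = -[1 + c(c + 2 sin 2τ) sec²(2τ)] r - c sec(2τ) h (where ' = d/dτ, c a real constant, cos 2τ ≠ 0). Then r'' = -r. -/

import Mathlib

/-- if `r, h : ℝ → ℝ²` satisfy, on an open set where `cos 2τ ≠ 0`,
`r' = c sec(2τ) r + h` and
`h' = -[1 + c(c + 2 sin 2τ) sec²(2τ)] r - c sec(2τ) h`, then `r'' = -r` there. -/
theorem stmt18 (c : ℝ) (S : Set ℝ) (hS : IsOpen S) (r w : ℝ → ℝ × ℝ)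
    (hcos : ∀ τ ∈ S, Real.cos (2 * τ) ≠ 0)
    (hdr : ∀ τ ∈ S, DifferentiableAt ℝ r τ)
    (hdw : ∀ τ ∈ S, DifferentiableAt ℝ w τ)
    (h1 : ∀ τ ∈ S, deriv r τ = (c / Real.cos (2 * τ)) • r τ + w τ)
    (h2 : ∀ τ ∈ S, deriv w τ =
      -((1 + c * (c + 2 * Real.sin (2 * τ)) / (Real.cos (2 * τ)) ^ 2) • r τ)
        - (c / Real.cos (2 * τ)) • w τ) :
    ∀ τ ∈ S, deriv (deriv r) τ = -r τ := by
  intro τ hτ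
  have hco := hcos τ hτ
  have heq : deriv r =ᶠ[nhds τ] fun t => (c / Real.cos (2 * t)) • r t + w t :=
    Filter.eventuallyEq_of_mem (hS.mem_nhds hτ) h1
  have hcos' : HasDerivAt (fun t : ℝ => Real.cos (2 * t))
      (-Real.sin (2 * τ) * 2) τ := by
    have := (Real.hasDerivAt_cos (2 * τ)).comp τ
      ((hasDerivAt_id τ).const_mul 2)
    simpa [Function.comp_def, mul_comm] using this
  have hf : HasDerivAt (fun t : ℝ => c / Real.cos (2 * t))
      ((0 * Real.cos (2 * τ) - c * (-Real.sin (2 * τ) * 2)) / Real.cos (2 * τ) ^ 2) τ :=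
    (hasDerivAt_const τ c).div hcos' hco
  have hr := (hdr τ hτ).hasDerivAt
  have hw := (hdw τ hτ).hasDerivAt
  have hsum := (hf.smul hr).add hw
  have hD : deriv (deriv r) τ =
      ((c / Real.cos (2 * τ)) • deriv r τ +
        ((0 * Real.cos (2 * τ) - c * (-Real.sin (2 * τ) * 2)) / Real.cos (2 * τ) ^ 2) • r τ)
        + deriv w τ := by
    rw [heq.deriv_eq]
    exact hsum.deriv
  rw [hD, h1 τ hτ, h2 τ hτ]
  have : (-1 : ℝ) • r τ = -r τ := by simp
  rw [← this]
  match_scalars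
  · field_simp
    ring
  · field_simp
    ring
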